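/- Let R be a commutative Noetherian ring and 𝔞 an ideal of R. Let 0 → L → M → N → 0 be a short exact sequence of R-modules. If any two of L, M, N are 𝔞-cofinite, then so is the third. -/

import Mathlib

open CategoryTheory CategoryTheory.Limits Opposite

noncomputable section

variable {R : Type} [CommRing R]

/-- The quotient functor `p ↦ M ⧸ p` on the (order) category of submodules of `M`. -/
def submoduleQuotFunctor (M : Type) [AddCommGroup M] [Module R M] :
    Submodule R M ⥤ ModuleCat R where
  obj p := ModuleCat.of R (M ⧸ p)
  map {p q} w := ModuleCat.ofHom (Submodule.mapQ p q LinearMap.id (fun _ hx => w.down.down hx))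
  map_id := fun p => by apply ModuleCat.hom_ext; apply Submodule.linearMap_qext; rfl
  map_comp := fun f g => by apply ModuleCat.hom_ext; apply Submodule.linearMap_qext; rfl

/-- The directed system `n ↦ 𝔞ⁿM` of submodules of `M` (indexed by `ℕᵒᵖ`,
as these submodules are decreasing in `n`). -/
def powersSubmoduleDiagram (𝔞 : Ideal R) (M : Type) [AddCommGroup M] [Module R M] :
    ℕᵒᵖ ⥤ Submodule R M where
  obj t := 𝔞 ^ (unop t) • ⊤
  map w := homOfLE (Submodule.smul_mono (Ideal.pow_le_pow_right w.unop.down.down) le_rfl)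

/-- The directed system `n ↦ M/𝔞ⁿM`, the maps being the natural surjections
`M/𝔞ⁿM → M/𝔞ᵐM` for `m ≤ n`. -/
def quotPowersDiagram (𝔞 : Ideal R) (M : Type) [AddCommGroup M] [Module R M] :
    ℕᵒᵖ ⥤ ModuleCat R :=
  powersSubmoduleDiagram 𝔞 M ⋙ submoduleQuotFunctor M

/-- The generalized local cohomology functor
`N ↦ H^i_𝔞(M, N) = colim_n Ext^i(M/𝔞ⁿM, N)`. -/
def genLocalCohomology (𝔞 : Ideal R) (M : Type) [AddCommGroup M] [Module R M] (i : ℕ) :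
    ModuleCat R ⥤ ModuleCat R :=
  colimit ((quotPowersDiagram 𝔞 M).op ⋙ Ext R (ModuleCat R) i)

/-- `X` is `𝔞`-cofinite if `Supp X ⊆ V(𝔞)` and `Ext^i(R/𝔞, X)` is finitely generated
for all `i ≥ 0`. -/
def IsCofinite (𝔞 : Ideal R) (X : Type) [AddCommGroup X] [Module R X] : Prop :=
  Module.support R X ⊆ PrimeSpectrum.zeroLocus (𝔞 : Set R) ∧
    ∀ i : ℕ, Module.Finite R
      (((Ext R (ModuleCat R) i).obj (op (ModuleCat.of R (R ⧸ 𝔞)))).obj (ModuleCat.of R X))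

/-- `M` has projective dimension at most `n`, i.e. `Ext^i(M, -) = 0` for all `i > n`. -/
def HasProjDimLE (M : Type) [AddCommGroup M] [Module R M] (n : ℕ) : Prop :=
  ∀ i : ℕ, n < i → ∀ X : ModuleCat R,
    Subsingleton (((Ext R (ModuleCat R) i).obj (op (ModuleCat.of R M))).obj X)

/-- `M` has finite projective dimension. -/
def HasFiniteProjDim (M : Type) [AddCommGroup M] [Module R M] : Prop :=
  ∃ n : ℕ, HasProjDimLE (R := R) M n


section AuxFinite

variable {R : Type} [CommRing R] [IsNoetherianRing R]

theorem auxFiniteOfInjective {A B : Type} [AddCommGroup A] [Module R A]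
    [AddCommGroup B] [Module R B] [Module.Finite R B]
    (f : A →ₗ[R] B) (hf : Function.Injective f) : Module.Finite R A := by
  have h1 : IsNoetherian R B := isNoetherian_of_isNoetherianRing_of_finite R B
  have h2 : IsNoetherian R A := isNoetherian_of_injective f hf
  exact ⟨IsNoetherian.noetherian ⊤⟩

theorem auxFiniteOfExact {A B C : Type} [AddCommGroup A] [Module R A]
    [AddCommGroup B] [Module R B] [AddCommGroup C] [Module R C]
    [Module.Finite R A] [Module.Finite R C]
    (f : A →ₗ[R] B) (g : B →ₗ[R] C) (h : LinearMap.range f = LinearMap.ker g) :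
    Module.Finite R B := by
  have hC : IsNoetherian R C := isNoetherian_of_isNoetherianRing_of_finite R C
  have hker : (LinearMap.ker g).FG := by
    rw [← h]
    exact Module.Finite.iff_fg.mp (Module.Finite.range f)
  have hq : Module.Finite R (B ⧸ LinearMap.ker g) := by
    have : Module.Finite R (LinearMap.range g) :=
      Module.Finite.iff_fg.mpr (IsNoetherian.noetherian _)
    exact Module.Finite.equiv g.quotKerEquivRange.symm
  constructor
  apply Submodule.fg_of_fg_map_of_fg_inf_ker (LinearMap.ker g).mkQ
  · rw [Submodule.map_top, Submodule.range_mkQ]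
    exact hq.fg_top
  · rw [Submodule.ker_mkQ, top_inf_eq]
    exact hker

end AuxFinite

section AuxComplex

variable {R : Type} [CommRing R]

/-- Postcomposition as a morphism of `linearYonedaObj` complexes. -/
def yonedaComplexMap (P : ChainComplex (ModuleCat R) ℕ) {Y Z : ModuleCat R} (φ : Y ⟶ Z) :
    P.linearYonedaObj R Y ⟶ P.linearYonedaObj R Z where
  f n := ModuleCat.ofHom (Linear.rightComp R (P.X n) φ)
  comm' i j _ := by
    ext (x : P.X i ⟶ Y)
    exact (Category.assoc (P.d j i) x φ).symm

end AuxComplex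

section Main

variable {R : Type} [CommRing R]
variable {L M N : Type} [AddCommGroup L] [Module R L] [AddCommGroup M] [Module R M]
    [AddCommGroup N] [Module R N]

/-- The short complex of `Hom`-complexes induced by a short exact sequence. -/
def yonedaSC (P : ChainComplex (ModuleCat R) ℕ)
    (f : L →ₗ[R] M) (g : M →ₗ[R] N) (hfg : Function.Exact f g) :
    ShortComplex (CochainComplex (ModuleCat R) ℕ) :=
  ShortComplex.mk (yonedaComplexMap P (ModuleCat.ofHom f))
    (yonedaComplexMap P (ModuleCat.ofHom g)) (by
      ext n (x : P.X n ⟶ ModuleCat.of R L)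
      exact ModuleCat.hom_ext (LinearMap.ext fun y => hfg.apply_apply_eq_zero (x y)))

theorem yonedaSC_shortExact (P : ChainComplex (ModuleCat R) ℕ)
    [∀ n, CategoryTheory.Projective (P.X n)]
    (f : L →ₗ[R] M) (g : M →ₗ[R] N)
    (hf : Function.Injective f) (hg : Function.Surjective g) (hfg : Function.Exact f g) :
    (yonedaSC P f g hfg).ShortExact := by
  apply HomologicalComplex.shortExact_of_degreewise_shortExact
  intro n
  haveI hm : Mono ((yonedaSC P f g hfg).map
      (HomologicalComplex.eval (ModuleCat R) (ComplexShape.up ℕ) n)).f := by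
    rw [ModuleCat.mono_iff_injective]
    intro x y hxy
    exact ModuleCat.hom_ext (LinearMap.ext fun a => hf (LinearMap.congr_fun (congrArg ModuleCat.Hom.hom hxy) a))
  haveI he : Epi ((yonedaSC P f g hfg).map
      (HomologicalComplex.eval (ModuleCat R) (ComplexShape.up ℕ) n)).g := by
    rw [ModuleCat.epi_iff_surjective]
    intro (ψ : P.X n ⟶ ModuleCat.of R N)
    have : Epi (ModuleCat.ofHom g) := (ModuleCat.epi_iff_surjective _).mpr hg
    obtain ⟨h, fac⟩ := CategoryTheory.Projective.factors ψ (ModuleCat.ofHom g)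
    exact ⟨h, fac⟩
  refine ⟨?_⟩
  rw [ShortComplex.moduleCat_exact_iff]
  intro (x : P.X n ⟶ ModuleCat.of R M) hx
  have hmem : ∀ a, x a ∈ LinearMap.range f := by
    intro a
    exact (hfg (x a)).mp (LinearMap.congr_fun (congrArg ModuleCat.Hom.hom hx) a)
  refine ⟨ModuleCat.ofHom ((LinearEquiv.ofInjective f hf).symm.toLinearMap ∘ₗ
    LinearMap.codRestrict (LinearMap.range f) x.hom hmem), ?_⟩
  refine ModuleCat.hom_ext (LinearMap.ext fun a => ?_)
  show f ((LinearEquiv.ofInjective f hf).symm ⟨x a, hmem a⟩) = x a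
  conv_lhs => rw [← LinearEquiv.ofInjective_apply f (h := hf)]
  rw [LinearEquiv.apply_symm_apply]

end Main

/-- Let `R` be a commutative Noetherian ring and `𝔞` an ideal of `R`. Let
`0 → L → M → N → 0` be a short exact sequence of `R`-modules. If any two of `L`, `M`, `N` are
`𝔞`-cofinite, then so is the third. -/
theorem isCofinite_two_of_three
    (R : Type) [CommRing R] [IsNoetherianRing R] (𝔞 : Ideal R)
    (L M N : Type) [AddCommGroup L] [Module R L] [AddCommGroup M] [Module R M]
    [AddCommGroup N] [Module R N]
    (f : L →ₗ[R] M) (g : M →ₗ[R] N)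
    (hf : Function.Injective f) (hg : Function.Surjective g) (hfg : Function.Exact f g) :
    (IsCofinite 𝔞 L → IsCofinite 𝔞 M → IsCofinite 𝔞 N) ∧
    (IsCofinite 𝔞 L → IsCofinite 𝔞 N → IsCofinite 𝔞 M) ∧
    (IsCofinite 𝔞 M → IsCofinite 𝔞 N → IsCofinite 𝔞 L) := by

  obtain ⟨P⟩ : Nonempty (ProjectiveResolution (ModuleCat.of R (R ⧸ 𝔞))) :=
    HasProjectiveResolution.out
  have hSE : (yonedaSC P.complex f g hfg).ShortExact :=
    yonedaSC_shortExact P.complex f g hf hg hfg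
  set SC := yonedaSC P.complex f g hfg with hSCdef
  -- transfer between Ext modules and homology of the Hom complexes
  have tr : ∀ (X : Type) (_ : AddCommGroup X) (_ : Module R X) (i : ℕ),
      Module.Finite R
        (((Ext R (ModuleCat R) i).obj (op (ModuleCat.of R (R ⧸ 𝔞)))).obj (ModuleCat.of R X)) ↔
      Module.Finite R ((P.complex.linearYonedaObj R (ModuleCat.of R X)).homology i) := by
    intro X _ _ i
    constructor
    · intro h
      exact Module.Finite.equiv (R := R) (P.isoExt i (ModuleCat.of R X)).toLinearEquiv
    · intro h
      exact Module.Finite.equiv (R := R) (P.isoExt i (ModuleCat.of R X)).toLinearEquiv.symm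
  -- injectivity of the map on 0-th homology
  have hmono : Function.Injective (HomologicalComplex.homologyMap SC.f 0) := by
    rw [← ModuleCat.mono_iff_injective]
    haveI h1 : IsIso (SC.X₁.homologyπ 0) :=
      SC.X₁.isIso_homologyπ 0 0 CochainComplex.prev_nat_zero
        (SC.X₁.shape 0 0 (by simp))
    haveI h2 : IsIso (SC.X₂.homologyπ 0) :=
      SC.X₂.isIso_homologyπ 0 0 CochainComplex.prev_nat_zero
        (SC.X₂.shape 0 0 (by simp))
    haveI hf0 : Mono (SC.f.f 0) := by
      rw [ModuleCat.mono_iff_injective]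
      intro x y hxy
      exact ModuleCat.hom_ext (LinearMap.ext fun a => hf (LinearMap.congr_fun (congrArg ModuleCat.Hom.hom hxy) a))
    haveI hc : Mono (HomologicalComplex.cyclesMap SC.f 0) := by
      have hcomm : HomologicalComplex.cyclesMap SC.f 0 ≫ SC.X₂.iCycles 0 =
          SC.X₁.iCycles 0 ≫ SC.f.f 0 := HomologicalComplex.cyclesMap_i _ _
      haveI : Mono (HomologicalComplex.cyclesMap SC.f 0 ≫ SC.X₂.iCycles 0) := by
        rw [hcomm]; exact mono_comp _ _
      exact mono_of_mono _ (SC.X₂.iCycles 0)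
    have heq : HomologicalComplex.homologyMap SC.f 0 =
        inv (SC.X₁.homologyπ 0) ≫
          (HomologicalComplex.cyclesMap SC.f 0 ≫ SC.X₂.homologyπ 0) := by
      rw [← HomologicalComplex.homologyπ_naturality, IsIso.inv_hom_id_assoc]
    rw [heq]
    exact mono_comp _ _
  refine ⟨?_, ?_, ?_⟩
  · -- L, M cofinite ⇒ N cofinite
    rintro ⟨hL1, hL2⟩ ⟨hM1, hM2⟩
    refine ⟨(Module.support_subset_of_surjective g hg).trans hM1, fun i => ?_⟩
    rw [tr N _ _ i]
    haveI hA : Module.Finite R (SC.X₂.homology i) := (tr M _ _ i).mp (hM2 i)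
    haveI hC : Module.Finite R (SC.X₁.homology (i + 1)) := (tr L _ _ (i + 1)).mp (hL2 (i + 1))
    exact auxFiniteOfExact (HomologicalComplex.homologyMap SC.g i).hom (hSE.δ i (i + 1) rfl).hom
      (hSE.homology_exact₃ i (i + 1) rfl).moduleCat_range_eq_ker
  · -- L, N cofinite ⇒ M cofinite
    rintro ⟨hL1, hL2⟩ ⟨hN1, hN2⟩
    refine ⟨?_, fun i => ?_⟩
    · rw [Module.support_of_exact hfg hf hg]
      exact Set.union_subset hL1 hN1
    · rw [tr M _ _ i]
      haveI hA : Module.Finite R (SC.X₁.homology i) := (tr L _ _ i).mp (hL2 i)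
      haveI hC : Module.Finite R (SC.X₃.homology i) := (tr N _ _ i).mp (hN2 i)
      exact auxFiniteOfExact (HomologicalComplex.homologyMap SC.f i).hom
        (HomologicalComplex.homologyMap SC.g i).hom
        (hSE.homology_exact₂ i).moduleCat_range_eq_ker
  · -- M, N cofinite ⇒ L cofinite
    rintro ⟨hM1, hM2⟩ ⟨hN1, hN2⟩
    refine ⟨(Module.support_subset_of_injective f hf).trans hM1, fun i => ?_⟩
    rw [tr L _ _ i]
    match i with
    | 0 =>
      haveI hB : Module.Finite R (SC.X₂.homology 0) := (tr M _ _ 0).mp (hM2 0)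
      exact auxFiniteOfInjective (HomologicalComplex.homologyMap SC.f 0).hom hmono
    | (j + 1) =>
      haveI hA : Module.Finite R (SC.X₃.homology j) := (tr N _ _ j).mp (hN2 j)
      haveI hC : Module.Finite R (SC.X₂.homology (j + 1)) := (tr M _ _ (j + 1)).mp (hM2 (j + 1))
      exact auxFiniteOfExact (hSE.δ j (j + 1) rfl).hom
        (HomologicalComplex.homologyMap SC.f (j + 1)).hom
        (hSE.homology_exact₁ j (j + 1) rfl).moduleCat_range_eq_ker
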